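/- Fix ℏ > 0 (or a formal/nonzero parameter), set q = e^ℏ, ω = 1 − q^{−2}, and for m ∈ ℕ let m̂ = (1 − q^{−2m})/(1 − q^{−2}). Let λ₁,…,λ_l be pairwise distinct complex numbers, n₁,…,n_l positive integers with Σ n_i = n, and n̂ = (n̂₁,…,n̂_l). Then Σ_{i=1}^l C_i(λ, n̂, ω) = n̂, where C_i(λ, ν, ω) = ν_i · ∏_{j ≠ i} (1 + ω·ν_j·λ_j/(λ_i − λ_j)). -/

import Mathlib

open Finset

/-- The coefficient functions `C_i(λ, ν, ω)`. -/
noncomputable def CC {l : ℕ} (lam nu : Fin l → ℂ) (ω : ℂ) (i : Fin l) : ℂ :=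
  nu i * ∏ j ∈ Finset.univ.erase i, (1 + ω * nu j * lam j / (lam i - lam j))

/-- The quantum integer `m̂ = (1 − q^{−2m})/(1 − q^{−2})`. -/
noncomputable def qhat (q : ℂ) (m : ℕ) : ℂ :=
  (1 - q ^ (-(2 * (m : ℤ)))) / (1 - q ^ (-2 : ℤ))

section Aux
open Polynomial
open Polynomial

lemma coeff_basis_top (t : Finset ℂ) (x : ℂ) (hx : x ∈ t) :
    (Lagrange.basis t id x).coeff (t.card - 1) = ∏ y ∈ t.erase x, (x - y)⁻¹ := by
  have hcard : (t.erase x).card = t.card - 1 := Finset.card_erase_of_mem hx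
  have hbasis : Lagrange.basis t id x
      = C (∏ y ∈ t.erase x, (x - y)⁻¹) * ∏ y ∈ t.erase x, (X - C y) := by
    rw [Lagrange.basis, map_prod, ← Finset.prod_mul_distrib]
    rfl
  have hmonic : (∏ y ∈ t.erase x, (X - C y)).Monic :=
    monic_prod_of_monic _ _ fun y _ => monic_X_sub_C y
  have hdeg : (∏ y ∈ t.erase x, (X - C y)).natDegree = t.card - 1 := by
    rw [natDegree_prod_of_monic _ _ fun y _ => monic_X_sub_C y]
    simp [hcard]
  rw [hbasis, coeff_C_mul, ← hdeg, hmonic.coeff_natDegree, mul_one]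

lemma keyB (s : Finset ℂ) (h0 : (0:ℂ) ∉ s) (b : ℂ → ℂ) :
    ∑ x ∈ s, (1 - b x) * ∏ y ∈ s.erase x, ((x - b y * y) / (x - y))
      = 1 - ∏ x ∈ s, b x := by
  classical
  set t : Finset ℂ := insert 0 s with ht
  set p : ℂ[X] := ∏ y ∈ s, (X - C (b y * y)) with hp
  set q : ℂ[X] := ∏ y ∈ s, (X - C y) with hq
  have hpm : p.Monic := monic_prod_of_monic _ _ fun y _ => monic_X_sub_C _
  have hqm : q.Monic := monic_prod_of_monic _ _ fun y _ => monic_X_sub_C _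
  have hpd : p.natDegree = s.card := by
    rw [hp, natDegree_prod_of_monic _ _ fun y _ => monic_X_sub_C _]; simp only [natDegree_X_sub_C, Finset.sum_const, smul_eq_mul, mul_one]
  have hqd : q.natDegree = s.card := by
    rw [hq, natDegree_prod_of_monic _ _ fun y _ => monic_X_sub_C _]; simp
  have hdp : p.degree = (s.card : ℕ) := by
    rw [degree_eq_natDegree hpm.ne_zero, hpd]
  have hdq : q.degree = (s.card : ℕ) := by
    rw [degree_eq_natDegree hqm.ne_zero, hqd]
  have hdeglt : (p - q).degree < ((s.card : ℕ) : WithBot ℕ) := by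
    have := degree_sub_lt (hdp.trans hdq.symm) hpm.ne_zero
      (hpm.leadingCoeff.trans hqm.leadingCoeff.symm)
    rwa [hdp] at this
  have hcardt : t.card = s.card + 1 := Finset.card_insert_of_notMem h0
  have hlt2 : (p - q).degree < (t.card : ℕ) := by
    refine lt_of_lt_of_le hdeglt ?_
    rw [hcardt]
    exact_mod_cast Nat.le_succ _
  have hinterp : p - q = Lagrange.interpolate t id (fun x => (p - q).eval x) :=
    Lagrange.eq_interpolate (Set.injOn_id _) hlt2
  have hmain : (0:ℂ) = ∑ x ∈ t, (p - q).eval x * ∏ y ∈ t.erase x, (x - y)⁻¹ := by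
    have h1 : (p - q).coeff s.card = 0 := coeff_eq_zero_of_degree_lt hdeglt
    have h2 := congrArg (fun f : ℂ[X] => f.coeff s.card) hinterp
    simp only [Lagrange.interpolate_apply, finset_sum_coeff, coeff_C_mul] at h2
    rw [h1] at h2
    rw [h2]
    refine Finset.sum_congr rfl fun x hx => ?_
    congr 1
    have := coeff_basis_top t x hx
    rw [hcardt] at this
    simpa using this
  have hne : ∀ y ∈ s, y ≠ (0:ℂ) := fun y hy => fun h => h0 (h ▸ hy)
  -- compute node 0 contribution
  have hterm0 : (p - q).eval 0 * ∏ y ∈ t.erase (0:ℂ), ((0:ℂ) - y)⁻¹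
      = (∏ x ∈ s, b x) - 1 := by
    have het : t.erase (0:ℂ) = s := by
      rw [ht, Finset.erase_insert h0]
    rw [het, eval_sub, hp, hq, eval_prod, eval_prod]
    simp only [eval_sub, eval_X, eval_C]
    rw [sub_mul, ← Finset.prod_mul_distrib, ← Finset.prod_mul_distrib]
    congr 1
    · refine Finset.prod_congr rfl fun y hy => ?_
      have hy0 := hne y hy
      field_simp
      ring
    · rw [Finset.prod_congr rfl fun y hy => ?_, Finset.prod_const_one]
      have hy0 := hne y hy
      field_simp
  have hterms : ∀ x ∈ s, (p - q).eval x * ∏ y ∈ t.erase x, (x - y)⁻¹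
      = (1 - b x) * ∏ y ∈ s.erase x, ((x - b y * y) / (x - y)) := by
    intro x hx
    have hx0 : x ≠ 0 := hne x hx
    have het : t.erase x = insert 0 (s.erase x) := by
      rw [ht, Finset.erase_insert_of_ne (Ne.symm hx0)]
    have h0e : (0:ℂ) ∉ s.erase x := fun h => h0 (Finset.mem_of_mem_erase h)
    have hqe : q.eval x = 0 := by
      rw [hq, eval_prod]
      exact Finset.prod_eq_zero hx (by simp)
    have hpe : p.eval x = (x - b x * x) * ∏ y ∈ s.erase x, (x - b y * y) := by
      rw [hp, eval_prod]
      simp only [eval_sub, eval_X, eval_C]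
      exact (Finset.mul_prod_erase s _ hx).symm
    rw [eval_sub, hqe, sub_zero, hpe, het, Finset.prod_insert h0e, sub_zero]
    have : (x - b x * x) * x⁻¹ = 1 - b x := by field_simp
    calc (x - b x * x) * (∏ y ∈ s.erase x, (x - b y * y)) *
          (x⁻¹ * ∏ y ∈ s.erase x, (x - y)⁻¹)
        = ((x - b x * x) * x⁻¹) * ((∏ y ∈ s.erase x, (x - b y * y)) *
            ∏ y ∈ s.erase x, (x - y)⁻¹) := by ring
      _ = (1 - b x) * ∏ y ∈ s.erase x, ((x - b y * y) / (x - y)) := by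
          rw [this, ← Finset.prod_mul_distrib]
          simp [div_eq_mul_inv]
  rw [ht, Finset.sum_insert h0] at hmain
  rw [Finset.sum_congr rfl hterms] at hmain
  have := hterm0
  rw [ht] at this
  rw [this] at hmain
  linear_combination -hmain

lemma keyL (s : Finset ℂ) (b : ℂ → ℂ) :
    ∑ x ∈ s, (1 - b x) * ∏ y ∈ s.erase x, ((x - b y * y) / (x - y))
      = 1 - ∏ x ∈ s, b x := by
  classical
  by_cases h0 : (0:ℂ) ∈ s
  · set s' : Finset ℂ := s.erase 0 with hs'
    have h0s' : (0:ℂ) ∉ s' := Finset.notMem_erase _ _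
    have hne : ∀ y ∈ s', y ≠ (0:ℂ) := fun y hy => (Finset.mem_erase.mp hy).1
    rw [← Finset.add_sum_erase s _ h0]
    have hterm0 : (1 - b 0) * ∏ y ∈ s.erase 0, (((0:ℂ) - b y * y) / (0 - y))
        = (1 - b 0) * ∏ y ∈ s', b y := by
      congr 1
      refine Finset.prod_congr rfl fun y hy => ?_
      have := hne y hy
      field_simp
      ring
    have hterms : ∀ x ∈ s', (1 - b x) * ∏ y ∈ s.erase x, ((x - b y * y) / (x - y))
        = (1 - b x) * ∏ y ∈ s'.erase x, ((x - b y * y) / (x - y)) := by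
      intro x hx
      have hx0 : x ≠ 0 := hne x hx
      have h0m : (0:ℂ) ∈ s.erase x := Finset.mem_erase.mpr ⟨Ne.symm hx0, h0⟩
      rw [← Finset.mul_prod_erase _ _ h0m]
      have h1 : (x - b 0 * 0) / (x - 0) = 1 := by
        field_simp
        simp
      rw [h1, one_mul]
      congr 1
      rw [Finset.erase_right_comm]
    rw [hterm0, Finset.sum_congr rfl hterms, keyB s' h0s' b,
      ← Finset.mul_prod_erase s b h0]
    ring
  · exact keyB s h0 b

end Aux

/-- Corollary A.3 (c): with `q = e^ℏ`, `ω = 1 − q^{−2}`, `n̂ᵢ` the quantum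
integers of the multiplicities `nᵢ` and `n = Σ nᵢ`, one has
`Σᵢ Cᵢ(λ, n̂, ω) = n̂`. -/
theorem stmt_7 (ℏ : ℝ) (hℏ : 0 < ℏ) (l : ℕ) (lam : Fin l → ℂ)
    (hlam : Function.Injective lam) (nn : Fin l → ℕ) (hnn : ∀ i, 0 < nn i)
    (n : ℕ) (hn : n = ∑ i, nn i) :
    ∑ i, CC lam (fun i => qhat (Complex.exp ℏ) (nn i)) (1 - (Complex.exp ℏ) ^ (-2 : ℤ)) i
      = qhat (Complex.exp ℏ) n := by
  classical
  set q : ℂ := Complex.exp ℏ with hqdef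
  set r : ℂ := q ^ (-2 : ℤ) with hrdef
  have hq0 : q ≠ 0 := Complex.exp_ne_zero _
  have hrreal : r = ((Real.exp (-2 * ℏ) : ℝ) : ℂ) := by
    rw [hrdef, hqdef, ← Complex.exp_int_mul, Complex.ofReal_exp]
    congr 1
    push_cast
    ring
  have hr1 : r ≠ 1 := by
    rw [hrreal]
    intro h
    have h2 : Real.exp (-2 * ℏ) = 1 := by exact_mod_cast h
    rw [Real.exp_eq_one_iff] at h2
    nlinarith
  have hω : (1:ℂ) - r ≠ 0 := sub_ne_zero_of_ne (Ne.symm hr1)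
  have hpow : ∀ m : ℕ, q ^ (-(2 * (m : ℤ))) = r ^ m := by
    intro m
    rw [hrdef, ← zpow_natCast (q ^ (-2 : ℤ)) m, ← zpow_mul]
    norm_num
  have hqhat : ∀ m : ℕ, (1 - r) * qhat q m = 1 - r ^ m := by
    intro m
    rw [qhat, hpow, mul_comm, div_mul_cancel₀ _ hω]
  set b : ℂ → ℂ := Function.extend lam (fun j => r ^ (nn j)) 0 with hbdef
  have hbe : ∀ j, b (lam j) = r ^ (nn j) := fun j => hlam.extend_apply _ _ j
  set s : Finset ℂ := Finset.image lam Finset.univ with hsdef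
  have hinj : ∀ x ∈ (Finset.univ : Finset (Fin l)), ∀ y ∈ Finset.univ,
      lam x = lam y → x = y := fun x _ y _ h => hlam h
  apply mul_left_cancel₀ hω
  rw [hqhat n, Finset.mul_sum]
  have hper : ∀ i : Fin l, (1 - r) * CC lam (fun i => qhat q (nn i)) (1 - r) i
      = (1 - b (lam i)) * ∏ y ∈ s.erase (lam i), ((lam i - b y * y) / (lam i - y)) := by
    intro i
    have hserase : s.erase (lam i) = Finset.image lam (Finset.univ.erase i) := by
      rw [hsdef, Finset.image_erase hlam]
    rw [hserase, Finset.prod_image (fun x _ y _ h => hlam h)]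
    simp only [CC]
    rw [← mul_assoc, hqhat, hbe]
    congr 1
    refine Finset.prod_congr rfl fun j hj => ?_
    have hji : j ≠ i := (Finset.mem_erase.mp hj).1
    have hd : lam i - lam j ≠ 0 := sub_ne_zero_of_ne fun h => hji (hlam h).symm
    rw [hbe j, show (1 - r) * qhat q (nn j) * lam j = (1 - r ^ (nn j)) * lam j by
      rw [hqhat]]
    field_simp
    ring
  have hs2 : ∑ x ∈ s, (1 - b x) * ∏ y ∈ s.erase x, ((x - b y * y) / (x - y))
      = ∑ i, (1 - b (lam i)) * ∏ y ∈ s.erase (lam i), ((lam i - b y * y) / (lam i - y)) :=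
    Finset.sum_image hinj
  rw [Finset.sum_congr rfl fun i _ => hper i, ← hs2, keyL s b]
  congr 1
  rw [hsdef, Finset.prod_image hinj]
  rw [Finset.prod_congr rfl fun j _ => hbe j, Finset.prod_pow_eq_pow_sum, hn]
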